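/- Let β ∈ W^{1,1}(I, S²) and let r ∈ L^∞(I, SO(3)) be an adapted frame for β, with rows r₁, r₂, r₃. Then: (i) β' = (β' · r₁) r₁ almost everywhere on I, and r₁ = ±β'/|β'| almost everywhere on {β' ≠ 0}; (ii) r₃ ∈ W^{1,1}(I) and r₃' · r₂ = 0 almost everywhere on I; (iii) if moreover r is continuous on I and r̃ ∈ C⁰(I, SO(3)) is another adapted frame for β, then for every t in I ∖ C_β one has r̃₁(t) = r₁(t) or r̃₁(t) = −r₁(t), where C_β = {t ∈ I : β is constant in a neighbourhood of t}. -/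

import Mathlib

open MeasureTheory Set Filter Matrix
open scoped RealInnerProductSpace Topology ENNReal NNReal

noncomputable section

/-- Euclidean 3-space. -/
abbrev E3 : Type := EuclideanSpace ℝ (Fin 3)

/-- Cross product on `ℝ³`. -/
def cross3 (v w : E3) : E3 :=
  (WithLp.equiv 2 (Fin 3 → ℝ)).symm
    ![v 1 * w 2 - v 2 * w 1, v 2 * w 0 - v 0 * w 2, v 0 * w 1 - v 1 * w 0]

/-- The `i`-th row of a 3×3 matrix, as a vector in `ℝ³`; for `r ∈ SO(3)` this is `rᵀ eᵢ`. -/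
def row3 (M : Matrix (Fin 3) (Fin 3) ℝ) (i : Fin 3) : E3 :=
  (WithLp.equiv 2 (Fin 3 → ℝ)).symm (M i)

/-- The set of rotation matrices. -/
def SO3 : Set (Matrix (Fin 3) (Fin 3) ℝ) :=
  {M | M * Mᵀ = 1 ∧ M.det = 1}

/-- Lebesgue measure restricted to the unit interval `I = (0,1)`. -/
def muI : Measure ℝ := volume.restrict (Set.Ioo 0 1)

/-- `f` is absolutely continuous on `[a,b]` with (a.e.) derivative `f'` (fundamental theorem of
calculus form); this encodes `f ∈ W^{1,1}((a,b))` via its continuous representative. -/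
def FTCOn (f f' : ℝ → E3) (a b : ℝ) : Prop :=
  IntervalIntegrable f' volume a b ∧
  ∀ t ∈ Set.Icc a b, f t = f a + ∫ s in a..t, f' s

/-- `V` is the parallel transport of `v` along the spherical curve `β` (with derivative `β'`)
on `[a,b]`: the absolutely continuous solution of `V' = -(V·β')β`, `V a = v`, in integral form.
`V t` is the quantity denoted `Π_{β|_(a,t)} v`. -/
def IsParTrans (β β' : ℝ → E3) (a b : ℝ) (v : E3) (V : ℝ → E3) : Prop :=
  V a = v ∧
  IntervalIntegrable (fun s => ⟪V s, β' s⟫ • β s) volume a b ∧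
  ∀ t ∈ Set.Icc a b, V t = v - ∫ s in a..t, ⟪V s, β' s⟫ • β s

section AuxLemmas

lemma aux_cross_par (v w : E3) (hw : ⟪w,w⟫ = 1) (h : cross3 v w = 0) : v = ⟪v,w⟫ • w := by
  have h0 := congrArg (fun x : E3 => x 0) h
  have h1 := congrArg (fun x : E3 => x 1) h
  have h2 := congrArg (fun x : E3 => x 2) h
  simp [cross3] at h0 h1 h2
  simp only [PiLp.inner_apply, RCLike.inner_apply, conj_trivial, Fin.sum_univ_three] at hw ⊢
  ext i
  fin_cases i <;> simp only [PiLp.smul_apply, smul_eq_mul]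
  · show v 0 = (w 0 * v 0 + w 1 * v 1 + w 2 * v 2) * w 0
    linear_combination -v 0*hw + w 1*h2 - w 2*h1
  · show v 1 = (w 0 * v 0 + w 1 * v 1 + w 2 * v 2) * w 1
    linear_combination -v 1*hw - w 0*h2 + w 2*h0
  · show v 2 = (w 0 * v 0 + w 1 * v 1 + w 2 * v 2) * w 2
    linear_combination -v 2*hw + w 0*h1 - w 1*h0

lemma aux_sign (u w : E3) (hu : ⟪u,u⟫ = 1) (hw : ⟪w,w⟫ = 1) (h : ⟪u,w⟫^2 = 1) :
    u = w ∨ u = -w := by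
  have expand : ⟪u - ⟪u,w⟫ • w, u - ⟪u,w⟫ • w⟫
      = ⟪u,u⟫ - 2*⟪u, ⟪u,w⟫ • w⟫ + ⟪⟪u,w⟫ • w, ⟪u,w⟫ • w⟫ :=
    real_inner_sub_sub_self _ _
  rw [real_inner_smul_right, real_inner_smul_left, real_inner_smul_right, hu, hw] at expand
  have hz : u - ⟪u,w⟫ • w = 0 := by
    refine (inner_self_eq_zero (𝕜 := ℝ)).mp ?_
    rw [expand]; linear_combination -h
  have heq := sub_eq_zero.mp hz
  rcases mul_self_eq_one_iff.mp (by linear_combination h : ⟪u,w⟫ * ⟪u,w⟫ = 1) with hc | hc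
  · left; rw [heq, hc, one_smul]
  · right; rw [heq, hc, neg_smul, one_smul]

lemma aux_par_sq (v u w : E3) (hv : v ≠ 0) (hu : ⟪u,u⟫ = 1) (hw : ⟪w,w⟫ = 1)
    (h1 : v = ⟪v,u⟫ • u) (h2 : v = ⟪v,w⟫ • w) : ⟪u,w⟫^2 = 1 := by
  obtain ⟨a, hva⟩ : ∃ a : ℝ, v = a • u := ⟨_, h1⟩
  obtain ⟨b, hvb⟩ : ∃ b : ℝ, v = b • w := ⟨_, h2⟩
  have ha0 : a ≠ 0 := fun h => hv (by rw [hva, h, zero_smul])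
  have hb0 : b ≠ 0 := fun h => hv (by rw [hvb, h, zero_smul])
  have e1 : ⟪v,v⟫ = a * (b * ⟪u,w⟫) := by
    nth_rewrite 1 [hva]; nth_rewrite 1 [hvb]
    rw [real_inner_smul_left, real_inner_smul_right]
  have e2 : ⟪v,v⟫ = a * a := by
    nth_rewrite 1 [hva]; nth_rewrite 1 [hva]
    rw [real_inner_smul_left, real_inner_smul_right, hu]; ring
  have e3 : ⟪v,v⟫ = b * b := by
    nth_rewrite 1 [hvb]; nth_rewrite 1 [hvb]
    rw [real_inner_smul_left, real_inner_smul_right, hw]; ring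
  have f1 : b * ⟪u,w⟫ = a := mul_left_cancel₀ ha0 (by linear_combination e2 - e1)
  have f2 : a * ⟪u,w⟫ = b := mul_left_cancel₀ hb0 (by linear_combination e3 - e1)
  have key : a * (⟪u,w⟫^2 - 1) = 0 := by linear_combination ⟪u,w⟫ * f2 + f1
  rcases mul_eq_zero.mp key with h | h
  · exact absurd h ha0
  · linarith [sub_eq_zero.mp h]

lemma aux_row3_inner (M : Matrix (Fin 3) (Fin 3) ℝ) (hM : M ∈ SO3) (i j : Fin 3) :
    ⟪row3 M i, row3 M j⟫ = if i = j then 1 else 0 := by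
  have : ⟪row3 M i, row3 M j⟫ = (M * Mᵀ) i j := by
    simp [row3, PiLp.inner_apply, RCLike.inner_apply, Matrix.mul_apply, Matrix.transpose_apply,
      mul_comm]
  rw [this, hM.1, Matrix.one_apply]

lemma aux_sign_norm (v u : E3) (huu : ⟪u,u⟫ = 1) (hv : v = ⟪v,u⟫ • u) (hne : v ≠ 0) :
    u = ‖v‖⁻¹ • v ∨ u = -(‖v‖⁻¹ • v) := by
  set c := ⟪v,u⟫ with hc
  have hc0 : c ≠ 0 := fun h => hne (by rw [hv, h, zero_smul])
  have hun : ‖u‖ = 1 := by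
    have h := real_inner_self_eq_norm_mul_norm u
    nlinarith [norm_nonneg u]
  have hnorm : ‖v‖ = |c| := by rw [hv, norm_smul, hun, Real.norm_eq_abs, mul_one]
  rcases lt_or_gt_of_ne hc0 with hlt | hgt
  · right
    rw [hnorm, hv, smul_smul]
    have : |c|⁻¹ * c = -1 := by rw [abs_of_neg hlt]; field_simp
    rw [this, neg_smul, one_smul, neg_neg]
  · left
    rw [hnorm, hv, smul_smul]
    have : |c|⁻¹ * c = 1 := by rw [abs_of_pos hgt]; field_simp
    rw [this, one_smul]

lemma aux_loc_const (β β' : ℝ → E3) (hβ : FTCOn β β' 0 1) (t : ℝ) (ht : t ∈ Ioo (0:ℝ) 1)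
    (ε : ℝ) (hz : volume {s | (s ∈ Ioo (0:ℝ) 1 ∧ |s - t| < ε) ∧ β' s ≠ 0} = 0) :
    ∀ s ∈ Ioo (0:ℝ) 1, |s - t| < ε → β s = β t := by
  intro s hs hst
  have hmem : ∀ u ∈ Icc (0:ℝ) 1, u ∈ uIcc (0:ℝ) 1 := by
    intro u hu; rw [uIcc_of_le (zero_le_one)]; exact hu
  have hint : ∀ u ∈ Icc (0:ℝ) 1, IntervalIntegrable β' volume 0 u := fun u hu =>
    hβ.1.mono_set (uIcc_subset_uIcc left_mem_uIcc (hmem u hu))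
  have hsub : β s - β t = ∫ u in t..s, β' u := by
    rw [hβ.2 s (Ioo_subset_Icc_self hs), hβ.2 t (Ioo_subset_Icc_self ht)]
    rw [add_sub_add_left_eq_sub]
    exact intervalIntegral.integral_interval_sub_left (hint s (Ioo_subset_Icc_self hs))
      (hint t (Ioo_subset_Icc_self ht))
  have habs : -ε < s - t ∧ s - t < ε := abs_lt.mp hst
  have hzero : ∫ u in t..s, β' u = 0 := by
    have hae : ∀ᵐ u ∂volume, ¬(((u ∈ Ioo (0:ℝ) 1 ∧ |u - t| < ε)) ∧ β' u ≠ 0) := by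
      rw [ae_iff]
      exact measure_mono_null (fun x hx => not_not.mp hx) hz
    rw [intervalIntegral.integral_congr_ae (g := fun _ => (0:E3)) ?_,
      intervalIntegral.integral_zero]
    filter_upwards [hae] with u hu humem
    by_contra hne
    apply hu
    rw [Set.mem_uIoc] at humem
    refine ⟨⟨⟨?_, ?_⟩, ?_⟩, hne⟩
    · rcases humem with ⟨h1,_⟩|⟨h1,_⟩ <;> [exact lt_trans ht.1 h1; exact lt_trans hs.1 h1]
    · rcases humem with ⟨_,h2⟩|⟨_,h2⟩ <;> [exact lt_of_le_of_lt h2 hs.2; exact lt_of_le_of_lt h2 ht.2]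
    · rw [abs_lt]
      rcases humem with ⟨h1,h2⟩|⟨h1,h2⟩ <;> constructor <;> linarith [habs.1, habs.2]
  rw [hzero] at hsub
  exact sub_eq_zero.mp hsub

lemma aux_lim_one {f : ℝ → ℝ} {t : ℝ} (ht : t ∈ Ioo (0:ℝ) 1) (hf : ContinuousOn f (Ioo 0 1))
    (seq : ℕ → ℝ) (hmem : ∀ n, seq n ∈ Ioo (0:ℝ) 1)
    (hdist : ∀ n, |seq n - t| < 1 / ((n : ℝ) + 1)) (hval : ∀ n, f (seq n) = 1) : f t = 1 := by
  have hlim : Filter.Tendsto seq atTop (𝓝 t) := by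
    rw [tendsto_iff_dist_tendsto_zero]
    refine squeeze_zero (fun n => dist_nonneg) (fun n => ?_)
      tendsto_one_div_add_atTop_nhds_zero_nat
    rw [Real.dist_eq]; exact le_of_lt (hdist n)
  have hT : Filter.Tendsto (fun n => f (seq n)) atTop (𝓝 (f t)) :=
    (hf t ht).tendsto.comp
      (tendsto_nhdsWithin_of_tendsto_nhds_of_eventually_within seq hlim (Eventually.of_forall hmem))
  have h2 : Filter.Tendsto (fun n => f (seq n)) atTop (𝓝 1) := by
    simp only [hval]; exact tendsto_const_nhds
  exact tendsto_nhds_unique hT h2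

lemma aux_inner_expand (M N : Matrix (Fin 3) (Fin 3) ℝ) :
    ⟪row3 M 0, row3 N 0⟫ = M 0 0 * N 0 0 + M 0 1 * N 0 1 + M 0 2 * N 0 2 := by
  simp [row3, PiLp.inner_apply, RCLike.inner_apply, mul_comm,
    Fin.sum_univ_three]

end AuxLemmas

/-- Properties of adapted frames (`r₃ = β` a.e., `β' × r₁ = 0` a.e.) of a curve
`β ∈ W^{1,1}(I, S²)`: (i) `β' = (β'·r₁) r₁` a.e. and `r₁ = ±β'/|β'|` a.e. on `{β' ≠ 0}`;
(ii) `r₃' · r₂ = 0` a.e. (with `r₃' = β'` a.e.); (iii) two continuous adapted frames have equal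
first rows up to sign away from the set `C_β` where `β` is locally constant. -/
theorem statement5
    (β β' : ℝ → E3) (hβ : FTCOn β β' 0 1)
    (hsphere : ∀ t ∈ Set.Icc (0:ℝ) 1, ‖β t‖ = 1)
    (r : ℝ → Matrix (Fin 3) (Fin 3) ℝ)
    (hrmeas : AEStronglyMeasurable r muI)
    (hSO : ∀ᵐ t ∂muI, r t ∈ SO3)
    (h3 : ∀ᵐ t ∂muI, row3 (r t) 2 = β t)
    (h1 : ∀ᵐ t ∂muI, cross3 (β' t) (row3 (r t) 0) = 0) :
    (∀ᵐ t ∂muI, β' t = ⟪β' t, row3 (r t) 0⟫ • row3 (r t) 0) ∧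
    (∀ᵐ t ∂muI, β' t ≠ 0 →
      (row3 (r t) 0 = ‖β' t‖⁻¹ • β' t ∨ row3 (r t) 0 = -(‖β' t‖⁻¹ • β' t))) ∧
    (∀ᵐ t ∂muI, ⟪β' t, row3 (r t) 1⟫ = 0) ∧
    (∀ rt : ℝ → Matrix (Fin 3) (Fin 3) ℝ,
      ContinuousOn r (Set.Ioo 0 1) → ContinuousOn rt (Set.Ioo 0 1) →
      (∀ᵐ t ∂muI, rt t ∈ SO3) →
      (∀ᵐ t ∂muI, row3 (rt t) 2 = β t) →
      (∀ᵐ t ∂muI, cross3 (β' t) (row3 (rt t) 0) = 0) →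
      ∀ t ∈ Set.Ioo (0:ℝ) 1,
        (¬ ∃ ε > (0:ℝ), ∀ s ∈ Set.Ioo (0:ℝ) 1, |s - t| < ε → β s = β t) →
        (row3 (rt t) 0 = row3 (r t) 0 ∨ row3 (rt t) 0 = - row3 (r t) 0)) := by
  
  have hO : ∀ M ∈ SO3, ⟪row3 M 0, row3 M 0⟫ = 1 := by
    intro M hM; have := aux_row3_inner M hM 0 0; simpa using this
  refine ⟨?_, ?_, ?_, ?_⟩
  · filter_upwards [hSO, h1] with s hs h1s
    exact aux_cross_par _ _ (hO _ hs) h1s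
  · filter_upwards [hSO, h1] with s hs h1s hne
    exact aux_sign_norm _ _ (hO _ hs) (aux_cross_par _ _ (hO _ hs) h1s) hne
  · filter_upwards [hSO, h1] with s hs h1s
    have horth : ⟪row3 (r s) 0, row3 (r s) 1⟫ = 0 := by
      have := aux_row3_inner (r s) hs 0 1; simpa using this
    rw [aux_cross_par _ _ (hO _ hs) h1s, real_inner_smul_left, horth, mul_zero]
  · intro rt hr hrc hSOt h3t h1t t ht hnc
    set Q : ℝ → Prop := fun s => r s ∈ SO3 ∧ rt s ∈ SO3 ∧
      cross3 (β' s) (row3 (r s) 0) = 0 ∧ cross3 (β' s) (row3 (rt s) 0) = 0 with hQdef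
    have hQ : ∀ᵐ s ∂muI, Q s := by
      filter_upwards [hSO, hSOt, h1, h1t] with s a b c d; exact ⟨a, b, c, d⟩
    have hN : volume ({s | ¬ Q s} ∩ Ioo 0 1) = 0 := by
      have := hQ
      rw [muI, ae_iff, Measure.restrict_apply' measurableSet_Ioo] at this
      exact this
    have hex : ∀ n : ℕ, ∃ s,
        ((s ∈ Ioo (0:ℝ) 1 ∧ |s - t| < 1/((n:ℝ)+1)) ∧ β' s ≠ 0) ∧ Q s := by
      intro n
      by_contra hno
      refine hnc ⟨1/((n:ℝ)+1), by positivity, ?_⟩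
      refine aux_loc_const β β' hβ t ht _ (measure_mono_null ?_ hN)
      intro s hs
      exact ⟨fun hQs => hno ⟨s, hs, hQs⟩, hs.1.1⟩
    choose seq hseq using hex
    have hseqmem : ∀ n, seq n ∈ Ioo (0:ℝ) 1 := fun n => (hseq n).1.1.1
    have hseqdist : ∀ n, |seq n - t| < 1/((n:ℝ)+1) := fun n => (hseq n).1.1.2
    have hentry : ∀ (f : ℝ → Matrix (Fin 3) (Fin 3) ℝ), ContinuousOn f (Ioo (0:ℝ) 1) →
        ∀ i j, ContinuousOn (fun s => f s i j) (Ioo (0:ℝ) 1) :=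
      fun f hf i j => (continuous_id.matrix_elem i j).comp_continuousOn hf
    -- the three test functions
    set g : ℝ → ℝ := fun s =>
      (rt s 0 0 * r s 0 0 + rt s 0 1 * r s 0 1 + rt s 0 2 * r s 0 2)^2 with hgdef
    set q1 : ℝ → ℝ := fun s => r s 0 0 * r s 0 0 + r s 0 1 * r s 0 1 + r s 0 2 * r s 0 2
      with hq1def
    set q2 : ℝ → ℝ := fun s => rt s 0 0 * rt s 0 0 + rt s 0 1 * rt s 0 1 + rt s 0 2 * rt s 0 2
      with hq2def
    have hgeq : ∀ s, g s = ⟪row3 (rt s) 0, row3 (r s) 0⟫^2 := fun s => by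
      rw [aux_inner_expand]
    have hq1eq : ∀ s, q1 s = ⟪row3 (r s) 0, row3 (r s) 0⟫ := fun s => by
      rw [aux_inner_expand]
    have hq2eq : ∀ s, q2 s = ⟪row3 (rt s) 0, row3 (rt s) 0⟫ := fun s => by
      rw [aux_inner_expand]
    have hgc : ContinuousOn g (Ioo 0 1) := by
      apply ContinuousOn.pow
      exact (((hentry rt hrc 0 0).mul (hentry r hr 0 0)).add
        ((hentry rt hrc 0 1).mul (hentry r hr 0 1))).add
        ((hentry rt hrc 0 2).mul (hentry r hr 0 2))
    have hq1c : ContinuousOn q1 (Ioo 0 1) :=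
      (((hentry r hr 0 0).mul (hentry r hr 0 0)).add
        ((hentry r hr 0 1).mul (hentry r hr 0 1))).add
        ((hentry r hr 0 2).mul (hentry r hr 0 2))
    have hq2c : ContinuousOn q2 (Ioo 0 1) :=
      (((hentry rt hrc 0 0).mul (hentry rt hrc 0 0)).add
        ((hentry rt hrc 0 1).mul (hentry rt hrc 0 1))).add
        ((hentry rt hrc 0 2).mul (hentry rt hrc 0 2))
    have hvalq1 : ∀ n, q1 (seq n) = 1 := fun n => by
      rw [hq1eq]; exact hO _ (hseq n).2.1
    have hvalq2 : ∀ n, q2 (seq n) = 1 := fun n => by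
      rw [hq2eq]; exact hO _ (hseq n).2.2.1
    have hvalg : ∀ n, g (seq n) = 1 := by
      intro n
      obtain ⟨⟨_, hne⟩, hQ1, hQ2, hc1, hc2⟩ := hseq n
      rw [hgeq]
      exact aux_par_sq (β' (seq n)) _ _ hne (hO _ hQ2) (hO _ hQ1)
        (aux_cross_par _ _ (hO _ hQ2) hc2) (aux_cross_par _ _ (hO _ hQ1) hc1)
    have hg1 : ⟪row3 (rt t) 0, row3 (r t) 0⟫^2 = 1 := by
      rw [← hgeq]; exact aux_lim_one ht hgc seq hseqmem hseqdist hvalg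
    have hu1 : ⟪row3 (rt t) 0, row3 (rt t) 0⟫ = 1 := by
      rw [← hq2eq]; exact aux_lim_one ht hq2c seq hseqmem hseqdist hvalq2
    have hw1 : ⟪row3 (r t) 0, row3 (r t) 0⟫ = 1 := by
      rw [← hq1eq]; exact aux_lim_one ht hq1c seq hseqmem hseqdist hvalq1
    exact aux_sign (row3 (rt t) 0) (row3 (r t) 0) hu1 hw1 hg1
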